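/- Each Taylor bound B_n^{Tay} = 2 tr(Σ_{l=0}^n (ρ⊗𝟙 − 𝟙⊗ρ)²(𝟙⊗𝟙 − ρ⊗𝟙 − 𝟙⊗ρ)^l S(H⊗H)) equals 2 Σ_{k,l} (p_k − p_l)² [Σ_{m=0}^n (1 − p_k − p_l)^m] |⟨k|H|l⟩|², and satisfies B_n^{Tay} ≤ F_Q for all n, with B_n^{Tay} → F_Q as n → ∞. -/

import Mathlib

open Matrix BigOperators Finset
open scoped Classical

namespace KST

variable {d : ℕ}

/-- Weighted inner product ⟨X,Y⟩_ρ = Re tr(ρ(XY+YX))/2. -/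
noncomputable def wip (ρ X Y : Matrix (Fin d) (Fin d) ℂ) : ℝ :=
  (((ρ * (X * Y + Y * X)).trace) / 2).re

/-- Membership in 𝒳: Hermitian with ⟨k|X|l⟩ = 0 whenever p_k = p_l = 0. -/
def memX (p : Fin d → ℝ) (v : Fin d → (Fin d → ℂ)) (X : Matrix (Fin d) (Fin d) ℂ) : Prop :=
  X.IsHermitian ∧ ∀ k l, p k = 0 → p l = 0 → star (v k) ⬝ᵥ X.mulVec (v l) = 0

/-- The superoperator R_ρ(X) = (ρX + Xρ)/2. -/
noncomputable def Rop (ρ : Matrix (Fin d) (Fin d) ℂ) (X : Matrix (Fin d) (Fin d) ℂ) :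
    Matrix (Fin d) (Fin d) ℂ :=
  (1/2 : ℂ) • (ρ * X + X * ρ)

/-- The operator i[ρ,H]. -/
noncomputable def comm (ρ H : Matrix (Fin d) (Fin d) ℂ) : Matrix (Fin d) (Fin d) ℂ :=
  Complex.I • (ρ * H - H * ρ)

/-- Krylov subspace 𝒦_n = span_ℝ {R_ρ^k(i[ρ,H]) : 0 ≤ k ≤ n-1}. -/
noncomputable def K (ρ H : Matrix (Fin d) (Fin d) ℂ) (n : ℕ) :
    Submodule ℝ (Matrix (Fin d) (Fin d) ℂ) :=
  Submodule.span ℝ ((fun k => (Rop ρ)^[k] (comm ρ H)) '' (Set.Iio n))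

/-- Quantum Fisher information (spectral formula). -/
noncomputable def FQ (p : Fin d → ℝ) (v : Fin d → (Fin d → ℂ))
    (H : Matrix (Fin d) (Fin d) ℂ) : ℝ :=
  2 * ∑ k, ∑ l, if 0 < p k + p l then
    (p k - p l)^2 / (p k + p l) * Complex.normSq (star (v k) ⬝ᵥ H.mulVec (v l)) else 0

/-- T_k = tr(i[ρ,H] R_ρ^k(i[ρ,H])). -/
noncomputable def Tk (ρ H : Matrix (Fin d) (Fin d) ℂ) (k : ℕ) : ℝ :=
  ((comm ρ H * (Rop ρ)^[k] (comm ρ H)).trace).re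

/-- P is the orthogonal projection of L onto 𝒦_n w.r.t. ⟨·,·⟩_ρ. -/
def IsProj (ρ H : Matrix (Fin d) (Fin d) ℂ) (n : ℕ)
    (L P : Matrix (Fin d) (Fin d) ℂ) : Prop :=
  P ∈ K ρ H n ∧ ∀ Y ∈ K ρ H n, wip ρ (L - P) Y = 0

open Kronecker

/-- The swap operator on the two-fold tensor product. -/
noncomputable def swapOp (d : ℕ) : Matrix (Fin d × Fin d) (Fin d × Fin d) ℂ :=
  Matrix.of fun x y => if x.1 = y.2 ∧ x.2 = y.1 then 1 else 0

/-- Taylor bound B_n^{Tay}. -/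
noncomputable def BTay (ρ H : Matrix (Fin d) (Fin d) ℂ) (n : ℕ) : ℝ :=
  (2 * (((∑ l ∈ Finset.range (n + 1),
      (ρ ⊗ₖ (1 : Matrix (Fin d) (Fin d) ℂ) - (1 : Matrix (Fin d) (Fin d) ℂ) ⊗ₖ ρ) ^ 2 *
        (1 - ρ ⊗ₖ (1 : Matrix (Fin d) (Fin d) ℂ) - (1 : Matrix (Fin d) (Fin d) ℂ) ⊗ₖ ρ) ^ l) *
    (swapOp d * (H ⊗ₖ H))).trace)).re


section Aux

lemma kron_conjT (A B : Matrix (Fin d) (Fin d) ℂ) : (A ⊗ₖ B)ᴴ = Aᴴ ⊗ₖ Bᴴ := by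
  ext ⟨i,j⟩ ⟨k,l⟩
  simp [Matrix.conjTranspose_apply, Matrix.kroneckerMap_apply, mul_comm]

lemma diag_sum {ι : Type*} (s : Finset ι) (f : ι → (Fin d × Fin d) → ℂ) :
    (∑ i ∈ s, Matrix.diagonal (f i)) = Matrix.diagonal (fun x => ∑ i ∈ s, f i x) := by
  ext x y
  by_cases h : x = y <;> simp [Matrix.diagonal_apply, h, Matrix.sum_apply]

lemma swapOp_apply' (x z : Fin d × Fin d) :
    swapOp d x z = if (x.2, x.1) = z then 1 else 0 := by
  simp only [swapOp, Matrix.of_apply, Prod.ext_iff]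
  rcases x with ⟨a,b⟩; rcases z with ⟨e,f⟩
  simp only
  by_cases h1 : a = f <;> by_cases h2 : b = e <;> simp [h1, h2, eq_comm]

lemma swap_mul_apply (M : Matrix (Fin d × Fin d) (Fin d × Fin d) ℂ) (x y : Fin d × Fin d) :
    (swapOp d * M) x y = M (x.2, x.1) y := by
  simp [Matrix.mul_apply, swapOp_apply', ite_mul]

lemma mul_swap_apply (M : Matrix (Fin d × Fin d) (Fin d × Fin d) ℂ) (x y : Fin d × Fin d) :
    (M * swapOp d) x y = M x (y.2, y.1) := by
  have h : ∀ z, swapOp d z y = if z = (y.2, y.1) then 1 else 0 := by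
    intro z; rw [swapOp_apply']
    by_cases h : z = (y.2, y.1)
    · subst h; simp
    · rw [if_neg h, if_neg]; intro hc; exact h (by rw [← hc])
  simp [Matrix.mul_apply, h, mul_ite]

lemma swap_mul_kron (A B : Matrix (Fin d) (Fin d) ℂ) :
    swapOp d * (A ⊗ₖ B) = (B ⊗ₖ A) * swapOp d := by
  ext x y
  rw [swap_mul_apply, mul_swap_apply]
  simp [Matrix.kroneckerMap_apply, mul_comm]

lemma trace_diag_swap (g : Fin d × Fin d → ℂ) (M : Matrix (Fin d × Fin d) (Fin d × Fin d) ℂ) :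
    (Matrix.diagonal g * (swapOp d * M)).trace = ∑ x : Fin d × Fin d, g x * M (x.2, x.1) x := by
  rw [Matrix.trace]
  congr 1; ext x
  rw [Matrix.diag_apply, Matrix.diagonal_mul, swap_mul_apply]

end Aux

/-- Spectral formula for the Taylor bounds, B_n^{Tay} ≤ F_Q, and convergence to F_Q. -/
theorem stmt17 {d : ℕ} (ρ : Matrix (Fin d) (Fin d) ℂ) (p : Fin d → ℝ) (v : Fin d → (Fin d → ℂ))
    (hρ : ρ = ∑ k, (p k : ℂ) • vecMulVec (v k) (star (v k)))
    (horth : ∀ k l, star (v k) ⬝ᵥ v l = (if k = l then 1 else 0))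
    (hppos : ∀ k, 0 ≤ p k) (hptr : ∑ k, p k = 1) (H : Matrix (Fin d) (Fin d) ℂ) (hH : H.IsHermitian) :
    (∀ n : ℕ, BTay ρ H n =
      2 * ∑ k, ∑ l, (p k - p l) ^ 2 *
        (∑ m ∈ Finset.range (n + 1), (1 - p k - p l) ^ m) *
        Complex.normSq (star (v k) ⬝ᵥ H.mulVec (v l))) ∧
    (∀ n : ℕ, BTay ρ H n ≤ FQ p v H) ∧
    Filter.Tendsto (BTay ρ H) Filter.atTop (nhds (FQ p v H)) := by
  classical
  -- diagonalization setup
  set U : Matrix (Fin d) (Fin d) ℂ := Matrix.of (fun i k => v k i) with hUdef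
  have hUU : Uᴴ * U = 1 := by
    ext k l
    simpa [Matrix.mul_apply, Matrix.conjTranspose_apply, dotProduct, hUdef,
      Matrix.one_apply] using horth k l
  have hUUr : U * Uᴴ = 1 := mul_eq_one_comm.mpr hUU
  set D : Matrix (Fin d) (Fin d) ℂ := Matrix.diagonal (fun k => (p k : ℂ)) with hDdef
  have hρU : ρ = U * D * Uᴴ := by
    rw [hρ]
    ext i j
    simp [Matrix.mul_apply, hDdef, Matrix.diagonal_apply, Matrix.sum_apply, vecMulVec,
      Matrix.conjTranspose_apply, hUdef, Finset.sum_mul, mul_comm, mul_assoc, mul_left_comm]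
  set W : Matrix (Fin d × Fin d) (Fin d × Fin d) ℂ := U ⊗ₖ U with hWdef
  have hWH : Wᴴ = Uᴴ ⊗ₖ Uᴴ := kron_conjT U U
  have hWWr : W * Wᴴ = 1 := by
    rw [hWdef, hWH, ← Matrix.mul_kronecker_mul, hUUr, Matrix.one_kronecker_one]
  have hWW : Wᴴ * W = 1 := mul_eq_one_comm.mpr hWWr
  set c : Matrix (Fin d × Fin d) (Fin d × Fin d) ℂ → Matrix (Fin d × Fin d) (Fin d × Fin d) ℂ :=
    fun X => W * X * Wᴴ with hcdef
  have hc1 : c 1 = 1 := by simp [hcdef, hWWr]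
  have hcmul : ∀ X Y, c (X * Y) = c X * c Y := by
    intro X Y
    simp only [hcdef]
    have h : W * X * Wᴴ * (W * Y * Wᴴ) = W * (X * ((Wᴴ * W) * (Y * Wᴴ))) := by
      simp only [Matrix.mul_assoc]
    rw [h, hWW, Matrix.one_mul]
    simp only [Matrix.mul_assoc]
  have hcsub : ∀ X Y, c (X - Y) = c X - c Y := by
    intro X Y; simp [hcdef, Matrix.mul_sub, Matrix.sub_mul]
  have hcpow : ∀ (X : Matrix (Fin d × Fin d) (Fin d × Fin d) ℂ) (k : ℕ), c (X ^ k) = c X ^ k := by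
    intro X k
    induction k with
    | zero => simpa using hc1
    | succ k ih => rw [pow_succ, pow_succ, hcmul, ih]
  have hA : ρ ⊗ₖ (1 : Matrix (Fin d) (Fin d) ℂ) = c (D ⊗ₖ 1) := by
    have h1 : (1 : Matrix (Fin d) (Fin d) ℂ) = U * 1 * Uᴴ := by simp [hUUr]
    conv_lhs => rw [hρU, h1]
    rw [Matrix.mul_kronecker_mul, Matrix.mul_kronecker_mul]
    simp [hcdef, hWdef, hWH, Matrix.mul_assoc, kron_conjT]
  have hB : (1 : Matrix (Fin d) (Fin d) ℂ) ⊗ₖ ρ = c (1 ⊗ₖ D) := by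
    have h1 : (1 : Matrix (Fin d) (Fin d) ℂ) = U * 1 * Uᴴ := by simp [hUUr]
    conv_lhs => rw [hρU, h1]
    rw [Matrix.mul_kronecker_mul, Matrix.mul_kronecker_mul]
    simp [hcdef, hWdef, hWH, Matrix.mul_assoc, kron_conjT]
  -- Hp: H in the eigenbasis
  set Hp : Matrix (Fin d) (Fin d) ℂ := Uᴴ * H * U with hHpdef
  have hHpH : Hpᴴ = Hp := by
    rw [hHpdef]
    simp [Matrix.conjTranspose_mul, Matrix.mul_assoc, hH.eq]
  have hHp_entry : ∀ k l, Hp k l = star (v k) ⬝ᵥ H.mulVec (v l) := by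
    intro k l
    simp only [hHpdef, Matrix.mul_apply, Matrix.conjTranspose_apply, hUdef, Matrix.of_apply,
      dotProduct, Matrix.mulVec, Pi.star_apply, Finset.sum_mul, Finset.mul_sum]
    rw [Finset.sum_comm]
    exact Finset.sum_congr rfl fun i _ => Finset.sum_congr rfl fun j _ => by ring
  -- main spectral formula
  have hmain : ∀ n : ℕ, BTay ρ H n =
      2 * ∑ k, ∑ l, (p k - p l) ^ 2 *
        (∑ m ∈ Finset.range (n + 1), (1 - p k - p l) ^ m) *
        Complex.normSq (star (v k) ⬝ᵥ H.mulVec (v l)) := by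
    intro n
    set g : Fin d × Fin d → ℂ := fun x =>
      ((p x.1 : ℂ) - p x.2) ^ 2 * ∑ m ∈ Finset.range (n + 1), (1 - (p x.1 : ℂ) - p x.2) ^ m
      with hgdef
    have h1 : D ⊗ₖ (1 : Matrix (Fin d) (Fin d) ℂ) - 1 ⊗ₖ D
        = Matrix.diagonal (fun x : Fin d × Fin d => (p x.1 : ℂ) - p x.2) := by
      rw [hDdef, ← Matrix.diagonal_one, Matrix.diagonal_kronecker_diagonal,
        Matrix.diagonal_kronecker_diagonal, Matrix.diagonal_sub]
      simp
    have h2 : (1 : Matrix (Fin d × Fin d) (Fin d × Fin d) ℂ) - D ⊗ₖ 1 - 1 ⊗ₖ D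
        = Matrix.diagonal (fun x : Fin d × Fin d => 1 - (p x.1 : ℂ) - p x.2) := by
      ext ⟨a,b⟩ ⟨e,f⟩
      by_cases h1' : a = e <;> by_cases h2' : b = f <;>
        simp [hDdef, Matrix.diagonal_apply, Matrix.one_apply, Matrix.kroneckerMap_apply,
          h1', h2', Prod.ext_iff]
    have hdiag : (∑ l ∈ Finset.range (n + 1),
        (D ⊗ₖ (1 : Matrix (Fin d) (Fin d) ℂ) - 1 ⊗ₖ D) ^ 2 *
          ((1 : Matrix (Fin d × Fin d) (Fin d × Fin d) ℂ) - D ⊗ₖ 1 - 1 ⊗ₖ D) ^ l)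
        = Matrix.diagonal g := by
      rw [h1, h2]
      have : ∀ l : ℕ, (Matrix.diagonal (fun x : Fin d × Fin d => (p x.1 : ℂ) - p x.2)) ^ 2 *
          (Matrix.diagonal (fun x : Fin d × Fin d => 1 - (p x.1 : ℂ) - p x.2)) ^ l
          = Matrix.diagonal (fun x : Fin d × Fin d =>
              ((p x.1 : ℂ) - p x.2) ^ 2 * (1 - (p x.1 : ℂ) - p x.2) ^ l) := by
        intro l
        rw [Matrix.diagonal_pow, Matrix.diagonal_pow, Matrix.diagonal_mul_diagonal]
        rfl
      rw [Finset.sum_congr rfl (fun l _ => this l), diag_sum]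
      refine congrArg Matrix.diagonal (funext fun x => ?_)
      simp only [hgdef]
      rw [Finset.mul_sum]
    -- rewrite the expression inside BTay via conjugation
    have hsum : (∑ l ∈ Finset.range (n + 1),
        (ρ ⊗ₖ (1 : Matrix (Fin d) (Fin d) ℂ) - (1 : Matrix (Fin d) (Fin d) ℂ) ⊗ₖ ρ) ^ 2 *
          (1 - ρ ⊗ₖ (1 : Matrix (Fin d) (Fin d) ℂ) - (1 : Matrix (Fin d) (Fin d) ℂ) ⊗ₖ ρ) ^ l)
        = c (Matrix.diagonal g) := by
      rw [← hdiag]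
      have hAc : ρ ⊗ₖ (1 : Matrix (Fin d) (Fin d) ℂ) - (1 : Matrix (Fin d) (Fin d) ℂ) ⊗ₖ ρ
          = c (D ⊗ₖ 1 - 1 ⊗ₖ D) := by rw [hcsub, ← hA, ← hB]
      have hBc : (1 : Matrix (Fin d × Fin d) (Fin d × Fin d) ℂ)
            - ρ ⊗ₖ (1 : Matrix (Fin d) (Fin d) ℂ) - (1 : Matrix (Fin d) (Fin d) ℂ) ⊗ₖ ρ
          = c (1 - D ⊗ₖ 1 - 1 ⊗ₖ D) := by rw [hcsub, hcsub, hc1, ← hA, ← hB]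
      have hterm : ∀ l ∈ Finset.range (n + 1),
          (ρ ⊗ₖ (1 : Matrix (Fin d) (Fin d) ℂ) - (1 : Matrix (Fin d) (Fin d) ℂ) ⊗ₖ ρ) ^ 2 *
            (1 - ρ ⊗ₖ (1 : Matrix (Fin d) (Fin d) ℂ) - (1 : Matrix (Fin d) (Fin d) ℂ) ⊗ₖ ρ) ^ l
          = c ((D ⊗ₖ (1 : Matrix (Fin d) (Fin d) ℂ) - 1 ⊗ₖ D) ^ 2 *
              ((1 : Matrix (Fin d × Fin d) (Fin d × Fin d) ℂ) - D ⊗ₖ 1 - 1 ⊗ₖ D) ^ l) := by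
        intro l _
        rw [hcmul, hcpow, hcpow, ← hAc, ← hBc]
      rw [Finset.sum_congr rfl hterm]
      simp [hcdef, Finset.mul_sum, Finset.sum_mul]
    -- cycle the trace
    have hcommS : Wᴴ * swapOp d = swapOp d * Wᴴ := by
      rw [hWH]; exact (swap_mul_kron Uᴴ Uᴴ).symm
    have hmove : Wᴴ * (swapOp d * (H ⊗ₖ H) * W) = swapOp d * (Hp ⊗ₖ Hp) := by
      have e1 : Wᴴ * (swapOp d * (H ⊗ₖ H) * W) = (Wᴴ * swapOp d) * ((H ⊗ₖ H) * W) := by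
        simp only [Matrix.mul_assoc]
      rw [e1, hcommS, Matrix.mul_assoc, ← Matrix.mul_assoc Wᴴ, hWH, hWdef,
        ← Matrix.mul_kronecker_mul, ← Matrix.mul_kronecker_mul, hHpdef]
    have hcyc : ∀ (X M : Matrix (Fin d × Fin d) (Fin d × Fin d) ℂ),
        (c X * M).trace = (X * (Wᴴ * (M * W))).trace := by
      intro X M
      simp only [hcdef]
      rw [Matrix.mul_assoc (W * X) Wᴴ M, Matrix.mul_assoc W X (Wᴴ * M),
        Matrix.trace_mul_comm, Matrix.mul_assoc X (Wᴴ * M) W, Matrix.mul_assoc Wᴴ M W]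
    have htr : ((∑ l ∈ Finset.range (n + 1),
        (ρ ⊗ₖ (1 : Matrix (Fin d) (Fin d) ℂ) - (1 : Matrix (Fin d) (Fin d) ℂ) ⊗ₖ ρ) ^ 2 *
          (1 - ρ ⊗ₖ (1 : Matrix (Fin d) (Fin d) ℂ) - (1 : Matrix (Fin d) (Fin d) ℂ) ⊗ₖ ρ) ^ l) *
        (swapOp d * (H ⊗ₖ H))).trace
        = ∑ x : Fin d × Fin d, g x * ((Hp ⊗ₖ Hp) (x.2, x.1) x) := by
      rw [hsum, hcyc, hmove, trace_diag_swap]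
    -- entries and real part
    have hentry : ∀ x : Fin d × Fin d, (Hp ⊗ₖ Hp) (x.2, x.1) x
        = (Complex.normSq (Hp x.1 x.2) : ℂ) := by
      intro x
      have h1 : Hp x.2 x.1 = star (Hp x.1 x.2) := by
        conv_lhs => rw [← hHpH]
        rfl
      simp only [Matrix.kroneckerMap_apply]
      rw [h1, Complex.star_def, ← Complex.normSq_eq_conj_mul_self]
    have hcast : ∑ x : Fin d × Fin d, g x * ((Hp ⊗ₖ Hp) (x.2, x.1) x)
        = ((∑ k, ∑ l, (p k - p l) ^ 2 *
            (∑ m ∈ Finset.range (n + 1), (1 - p k - p l) ^ m) *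
            Complex.normSq (star (v k) ⬝ᵥ H.mulVec (v l)) : ℝ) : ℂ) := by
      simp only [← hHp_entry]
      rw [Fintype.sum_prod_type]
      push_cast
      refine Finset.sum_congr rfl fun k _ => Finset.sum_congr rfl fun l _ => ?_
      rw [hentry (k, l)]
      try (simp only [hgdef]; push_cast; ring)
    unfold BTay
    rw [htr, hcast]
    norm_cast

  refine ⟨hmain, ?_, ?_⟩
  · -- B_n ≤ F_Q
    intro n
    rw [hmain n]
    unfold FQ
    have h2 : ∀ k l : Fin d,
        (p k - p l) ^ 2 * (∑ m ∈ Finset.range (n + 1), (1 - p k - p l) ^ m) *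
          Complex.normSq (star (v k) ⬝ᵥ H.mulVec (v l))
        ≤ if 0 < p k + p l then (p k - p l) ^ 2 / (p k + p l) *
            Complex.normSq (star (v k) ⬝ᵥ H.mulVec (v l)) else 0 := by
      intro k l
      by_cases hs : 0 < p k + p l
      · rw [if_pos hs]
        by_cases hkl : k = l
        · subst hkl; simp
        · have hs1 : p k + p l ≤ 1 := by
            have hsub : ∑ i ∈ ({k, l} : Finset (Fin d)), p i ≤ ∑ i, p i :=
              Finset.sum_le_sum_of_subset_of_nonneg (Finset.subset_univ _)
                (fun i _ _ => hppos i)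
            rwa [Finset.sum_pair hkl, hptr] at hsub
          have hr0 : 0 ≤ 1 - p k - p l := by linarith
          have hr1 : 1 - p k - p l < 1 := by linarith
          have hgeom : ∑ m ∈ Finset.range (n + 1), (1 - p k - p l) ^ m ≤ 1 / (p k + p l) := by
            have hh := hasSum_geometric_of_lt_one hr0 hr1
            have hle := sum_le_hasSum (Finset.range (n + 1)) (fun i _ => pow_nonneg hr0 i) hh
            have he : (1 - (1 - p k - p l))⁻¹ = 1 / (p k + p l) := by
              rw [one_div]; congr 1; ring
            rwa [he] at hle
          calc (p k - p l) ^ 2 * (∑ m ∈ Finset.range (n + 1), (1 - p k - p l) ^ m) *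
                Complex.normSq (star (v k) ⬝ᵥ H.mulVec (v l))
              ≤ (p k - p l) ^ 2 * (1 / (p k + p l)) *
                Complex.normSq (star (v k) ⬝ᵥ H.mulVec (v l)) :=
                mul_le_mul_of_nonneg_right
                  (mul_le_mul_of_nonneg_left hgeom (sq_nonneg _)) (Complex.normSq_nonneg _)
            _ = (p k - p l) ^ 2 / (p k + p l) *
                Complex.normSq (star (v k) ⬝ᵥ H.mulVec (v l)) := by ring
      · rw [if_neg hs]
        have hk : p k = 0 := by nlinarith [hppos k, hppos l]
        have hl : p l = 0 := by nlinarith [hppos k, hppos l]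
        rw [hk, hl]
        norm_num
    have hsum2 := Finset.sum_le_sum
      (fun k (_ : k ∈ Finset.univ) => Finset.sum_le_sum (fun l (_ : l ∈ Finset.univ) => h2 k l))
    linarith
  · -- convergence
    refine Filter.Tendsto.congr (fun n => (hmain n).symm) ?_
    unfold FQ
    refine Filter.Tendsto.const_mul 2 ?_
    refine tendsto_finset_sum _ (fun k _ => tendsto_finset_sum _ (fun l _ => ?_))
    by_cases hs : 0 < p k + p l
    · simp only [if_pos hs]
      by_cases hkl : k = l
      · subst hkl
        simpa using (tendsto_const_nhds :
          Filter.Tendsto (fun _ : ℕ => (0 : ℝ)) Filter.atTop (nhds 0))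
      · have hs1 : p k + p l ≤ 1 := by
          have hsub : ∑ i ∈ ({k, l} : Finset (Fin d)), p i ≤ ∑ i, p i :=
            Finset.sum_le_sum_of_subset_of_nonneg (Finset.subset_univ _)
              (fun i _ _ => hppos i)
          rwa [Finset.sum_pair hkl, hptr] at hsub
        have hr0 : 0 ≤ 1 - p k - p l := by linarith
        have hr1 : 1 - p k - p l < 1 := by linarith
        have hh := hasSum_geometric_of_lt_one hr0 hr1
        have h1 := hh.tendsto_sum_nat
        have h2' : Filter.Tendsto (fun n : ℕ => ∑ m ∈ Finset.range (n + 1), (1 - p k - p l) ^ m)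
            Filter.atTop (nhds ((1 - (1 - p k - p l))⁻¹)) :=
          h1.comp (Filter.tendsto_add_atTop_nat 1)
        have h3 := (h2'.const_mul ((p k - p l) ^ 2)).mul_const
          (Complex.normSq (star (v k) ⬝ᵥ H.mulVec (v l)))
        convert h3 using 2
        have he : (1 - (1 - p k - p l))⁻¹ = (p k + p l)⁻¹ := by congr 1; ring
        rw [he]
        ring
    · simp only [if_neg hs]
      have hk : p k = 0 := by nlinarith [hppos k, hppos l]
      have hl : p l = 0 := by nlinarith [hppos k, hppos l]
      have : ∀ n : ℕ, (p k - p l) ^ 2 *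
          (∑ m ∈ Finset.range (n + 1), (1 - p k - p l) ^ m) *
          Complex.normSq (star (v k) ⬝ᵥ H.mulVec (v l)) = 0 := by
        intro n; rw [hk, hl]; ring
      simpa [this] using (tendsto_const_nhds :
        Filter.Tendsto (fun _ : ℕ => (0 : ℝ)) Filter.atTop (nhds 0))


end KST
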